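/- Let F : ℝ^d → ℝ be continuous, bounded above with unique maximizer h*, satisfying the inverse continuity condition: there exist c_p, p, R_p > 0 and F_∞ > 0 with c_p|h − h*|^p ≤ F(h*) − F(h) for |h| ≤ R_p, and F(h*) − F(h) ≥ F_∞ for |h| > R_p. Let ρ ∈ P₁(ℝ^d) with h* ∈ supp(ρ). Then for any r ∈ (0, R_p] and q > 0 with q + F_r < F_∞, where F_r := F(h*) − inf_{B(h*,r)} F, the mean of the exponentially reweighted measure satisfies |m(G_{αF}[ρ]) − h*| ≤ ((q + F_r)/c_p)^{1/p} + (e^{−αq}/ρ(B(h*,r))) ∫|h − h*| dρ(h). -/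

import Mathlib

open MeasureTheory Real
open scoped ENNReal NNReal

/-- Exponential selection operator with pressure `α`. -/
noncomputable def selectOp {d : ℕ} (α : ℝ) (F : EuclideanSpace ℝ (Fin d) → ℝ)
    (ρ : Measure (EuclideanSpace ℝ (Fin d))) : Measure (EuclideanSpace ℝ (Fin d)) :=
  ρ.withDensity (fun x => ENNReal.ofReal (exp (α * F x) / ∫ y, exp (α * F y) ∂ρ))

/-- Quantitative Laplace principle: for a fitness `F` with unique global
maximizer `h*` satisfying an inverse continuity condition, the mean of the
exponentially reweighted measure satisfies
`|m(G_{αF}[ρ]) − h*| ≤ ((q + F_r)/c_p)^{1/p} + (e^{−αq}/ρ(B(h*,r))) ∫|h−h*| dρ`. -/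
theorem quantitative_laplace {d : ℕ} (F : EuclideanSpace ℝ (Fin d) → ℝ)
    (hFc : Continuous F) (hstar : EuclideanSpace ℝ (Fin d))
    (hbdd : ∀ h, F h ≤ F hstar) (hmax : ∀ h, h ≠ hstar → F h < F hstar)
    (cp p Rp Finfty : ℝ) (hcp : 0 < cp) (hp : 0 < p) (hRp : 0 < Rp) (hFi : 0 < Finfty)
    (hinv : ∀ h, ‖h‖ ≤ Rp → cp * ‖h - hstar‖ ^ p ≤ F hstar - F h)
    (hfar : ∀ h, Rp < ‖h‖ → Finfty ≤ F hstar - F h)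
    (ρ : Measure (EuclideanSpace ℝ (Fin d))) [IsProbabilityMeasure ρ]
    (hmom : Integrable (fun h => ‖h‖) ρ)
    (hsupp : ∀ s > 0, 0 < ρ (Metric.ball hstar s))
    (α : ℝ) (hα : 0 < α)
    (r q : ℝ) (hr : 0 < r) (hrR : r ≤ Rp) (hq : 0 < q)
    (hqF : q + (F hstar - sInf (F '' Metric.ball hstar r)) < Finfty) :
    ‖(∫ h, h ∂(selectOp α F ρ)) - hstar‖
      ≤ ((q + (F hstar - sInf (F '' Metric.ball hstar r))) / cp) ^ (1/p)
        + (exp (-α * q) / (ρ (Metric.ball hstar r)).toReal) * ∫ h, ‖h - hstar‖ ∂ρ := by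
  classical
  set Z : ℝ := ∫ y, exp (α * F y) ∂ρ with hZdef
  set b : ℝ := sInf (F '' Metric.ball hstar r) with hbdef
  set Fr : ℝ := F hstar - b with hFrdef
  have hballself : hstar ∈ Metric.ball hstar r := Metric.mem_ball_self hr
  have hbdd_below : BddBelow (F '' Metric.ball hstar r) := by
    have hc : IsCompact (Metric.closedBall hstar r) := isCompact_closedBall _ _
    exact ((hc.image hFc).bddBelow).mono
      (Set.image_mono Metric.ball_subset_closedBall)
  have hble : ∀ y ∈ Metric.ball hstar r, b ≤ F y := fun y hy =>
    csInf_le hbdd_below ⟨y, hy, rfl⟩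
  have hFrnn : 0 ≤ Fr := sub_nonneg.2 (hble hstar hballself)
  have hFmeas : Measurable F := hFc.measurable
  have hexp_cont : Continuous fun x => exp (α * F x) :=
    Real.continuous_exp.comp (continuous_const.mul hFc)
  have hexp_int : Integrable (fun x => exp (α * F x)) ρ := by
    apply Integrable.mono' (integrable_const (exp (α * F hstar)))
      hexp_cont.aestronglyMeasurable
    filter_upwards with x
    rw [Real.norm_eq_abs, abs_of_pos (exp_pos _)]
    exact exp_le_exp.2 (mul_le_mul_of_nonneg_left (hbdd x) hα.le)
  have hρB : 0 < (ρ (Metric.ball hstar r)).toReal :=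
    ENNReal.toReal_pos (hsupp r hr).ne' (measure_ne_top _ _)
  have hZlb : exp (α * b) * (ρ (Metric.ball hstar r)).toReal ≤ Z := by
    have h1 : exp (α * b) * (ρ (Metric.ball hstar r)).toReal
        ≤ ∫ x in Metric.ball hstar r, exp (α * F x) ∂ρ :=
      setIntegral_ge_of_const_le_real measurableSet_ball (measure_ne_top _ _)
        (fun x hx => exp_le_exp.2 (mul_le_mul_of_nonneg_left (hble x hx) hα.le))
        hexp_int.integrableOn
    have h2 : ∫ x in Metric.ball hstar r, exp (α * F x) ∂ρ ≤ Z :=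
      setIntegral_le_integral hexp_int (Filter.Eventually.of_forall fun x => (exp_pos _).le)
    linarith
  have hZpos : 0 < Z := lt_of_lt_of_le (by positivity) hZlb
  set w : EuclideanSpace ℝ (Fin d) → ℝ := fun x => exp (α * F x) / Z with hwdef
  have hwpos : ∀ x, 0 < w x := fun x => div_pos (exp_pos _) hZpos
  have hwmeas : Measurable w := hexp_cont.measurable.div_const Z
  have hwint : Integrable w ρ := hexp_int.div_const Z
  have hwone : ∫ x, w x ∂ρ = 1 := by
    simp only [hwdef]
    rw [integral_div]
    exact div_self hZpos.ne'
  have hwb : ∀ x, w x ≤ exp (α * F hstar) / Z := fun x =>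
    (div_le_div_iff_of_pos_right hZpos).mpr
      (exp_le_exp.2 (mul_le_mul_of_nonneg_left (hbdd x) hα.le))
  have hmeasG : selectOp α F ρ
      = ρ.withDensity (fun x => ((w x).toNNReal : ℝ≥0∞)) := rfl
  have hInt : ∫ x, x ∂(selectOp α F ρ) = ∫ x, w x • x ∂ρ := by
    have hwnn : Measurable (fun x => (w x).toNNReal) :=
      measurable_real_toNNReal.comp hwmeas
    rw [hmeasG, integral_withDensity_eq_integral_smul₀ hwnn.aemeasurable]
    congr 1; ext x
    rw [NNReal.smul_def, Real.coe_toNNReal _ (hwpos x).le]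
  have hid : Integrable (fun h : EuclideanSpace ℝ (Fin d) => h) ρ :=
    (integrable_norm_iff aestronglyMeasurable_id).mp hmom
  have hsubint : Integrable (fun h => h - hstar) ρ := hid.sub (integrable_const _)
  have hnormint : Integrable (fun h => ‖h - hstar‖) ρ := hsubint.norm
  have hwsmulid : Integrable (fun h => w h • h) ρ := by
    apply Integrable.mono' (hmom.const_mul (exp (α * F hstar) / Z))
      (hwmeas.aestronglyMeasurable.smul aestronglyMeasurable_id)
    filter_upwards with x
    show ‖w x • x‖ ≤ _
    rw [norm_smul, Real.norm_eq_abs, abs_of_pos (hwpos x)]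
    exact mul_le_mul_of_nonneg_right (hwb x) (norm_nonneg _)
  have hmean : (∫ h, h ∂(selectOp α F ρ)) - hstar = ∫ h, w h • (h - hstar) ∂ρ := by
    rw [hInt]
    have h1 : ∫ h, w h • (h - hstar) ∂ρ
        = (∫ h, w h • h ∂ρ) - ∫ h, w h • hstar ∂ρ := by
      rw [← integral_sub hwsmulid (hwint.smul_const hstar)]
      simp [smul_sub]
    have h2 : ∫ h, w h • hstar ∂ρ = hstar := by
      rw [integral_smul_const, hwone, one_smul]
    rw [h1, h2]
  rw [hmean]
  have hnb : ‖∫ h, w h • (h - hstar) ∂ρ‖ ≤ ∫ h, w h * ‖h - hstar‖ ∂ρ := by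
    calc ‖∫ h, w h • (h - hstar) ∂ρ‖ ≤ ∫ h, ‖w h • (h - hstar)‖ ∂ρ :=
          norm_integral_le_integral_norm _
    _ = ∫ h, w h * ‖h - hstar‖ ∂ρ := by
        congr 1; ext h
        rw [norm_smul, Real.norm_eq_abs, abs_of_pos (hwpos h)]
  refine hnb.trans ?_
  set S : Set (EuclideanSpace ℝ (Fin d)) := {h | F hstar - F h ≤ q + Fr} with hSdef
  have hSmeas : MeasurableSet S :=
    measurableSet_le (measurable_const.sub hFmeas) measurable_const
  set K : ℝ := ((q + Fr) / cp) ^ (1/p) with hKdef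
  have hqFr : 0 < q + Fr := add_pos_of_pos_of_nonneg hq hFrnn
  have hKnn : 0 ≤ K := Real.rpow_nonneg (by positivity) _
  set C' : ℝ := exp (-α * q) / (ρ (Metric.ball hstar r)).toReal with hCdef
  have hCnn : 0 ≤ C' := by positivity
  have hS_bound : ∀ h ∈ S, ‖h - hstar‖ ≤ K := by
    intro h hh
    by_cases hhR : ‖h‖ ≤ Rp
    · have h1 : cp * ‖h - hstar‖ ^ p ≤ q + Fr := (hinv h hhR).trans hh
      have h2 : ‖h - hstar‖ ^ p ≤ (q + Fr) / cp := (le_div_iff₀' hcp).mpr h1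
      have h3 : (‖h - hstar‖ ^ p) ^ (1/p) ≤ K :=
        Real.rpow_le_rpow (Real.rpow_nonneg (norm_nonneg _) _) h2 (by positivity)
      rwa [← Real.rpow_mul (norm_nonneg _), mul_one_div, div_self hp.ne',
        Real.rpow_one] at h3
    · exfalso
      have h4 := hfar h (lt_of_not_ge hhR)
      have h5 : F hstar - F h ≤ q + Fr := hh
      linarith
  have hSc_bound : ∀ h ∉ S, w h ≤ C' := by
    intro h hh
    have h1 : q + Fr < F hstar - F h := lt_of_not_ge hh
    have h2 : F h ≤ b - q := by simp only [hFrdef] at h1; linarith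
    have h3 : exp (α * F h) ≤ exp (-α * q) * exp (α * b) := by
      rw [← Real.exp_add]
      apply exp_le_exp.2
      nlinarith [mul_le_mul_of_nonneg_left h2 hα.le]
    show exp (α * F h) / Z ≤ C'
    rw [hCdef, div_le_div_iff₀ hZpos hρB]
    nlinarith [mul_le_mul_of_nonneg_right h3 hρB.le,
      mul_le_mul_of_nonneg_left hZlb (exp_pos (-α * q)).le]
  have hgint : Integrable (fun h => w h * ‖h - hstar‖) ρ := by
    apply Integrable.mono' (hnormint.const_mul (exp (α * F hstar) / Z))
      (hwmeas.aestronglyMeasurable.mul hnormint.aestronglyMeasurable)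
    filter_upwards with x
    have hx : ‖w x * ‖x - hstar‖‖ = w x * ‖x - hstar‖ := by
      rw [Real.norm_eq_abs]
      exact abs_of_nonneg (mul_nonneg (hwpos x).le (norm_nonneg _))
    simp only [Pi.mul_apply]
    rw [hx]
    exact mul_le_mul_of_nonneg_right (hwb x) (norm_nonneg _)
  rw [← integral_add_compl hSmeas hgint]
  have part1 : ∫ h in S, w h * ‖h - hstar‖ ∂ρ ≤ K := by
    have h1 : ∫ h in S, w h * ‖h - hstar‖ ∂ρ ≤ ∫ h in S, K * w h ∂ρ := by
      apply setIntegral_mono_on hgint.integrableOn (hwint.const_mul K).integrableOn hSmeas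
      intro h hh
      have h2 := hS_bound h hh
      have h3 := (hwpos h).le
      nlinarith
    have h4 : ∫ h in S, w h ∂ρ ≤ 1 := by
      rw [← hwone]
      exact setIntegral_le_integral hwint (Filter.Eventually.of_forall fun x => (hwpos x).le)
    calc ∫ h in S, w h * ‖h - hstar‖ ∂ρ ≤ ∫ h in S, K * w h ∂ρ := h1
    _ = K * ∫ h in S, w h ∂ρ := integral_const_mul K _
    _ ≤ K * 1 := mul_le_mul_of_nonneg_left h4 hKnn
    _ = K := mul_one K
  have part2 : ∫ h in Sᶜ, w h * ‖h - hstar‖ ∂ρ ≤ C' * ∫ h, ‖h - hstar‖ ∂ρ := by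
    have h1 : ∫ h in Sᶜ, w h * ‖h - hstar‖ ∂ρ ≤ ∫ h in Sᶜ, C' * ‖h - hstar‖ ∂ρ := by
      apply setIntegral_mono_on hgint.integrableOn
        (hnormint.const_mul C').integrableOn hSmeas.compl
      intro h hh
      exact mul_le_mul_of_nonneg_right (hSc_bound h hh) (norm_nonneg _)
    have h2 : ∫ h in Sᶜ, ‖h - hstar‖ ∂ρ ≤ ∫ h, ‖h - hstar‖ ∂ρ :=
      setIntegral_le_integral hnormint (Filter.Eventually.of_forall fun x => norm_nonneg _)
    calc ∫ h in Sᶜ, w h * ‖h - hstar‖ ∂ρ ≤ ∫ h in Sᶜ, C' * ‖h - hstar‖ ∂ρ := h1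
    _ = C' * ∫ h in Sᶜ, ‖h - hstar‖ ∂ρ := integral_const_mul C' _
    _ ≤ C' * ∫ h, ‖h - hstar‖ ∂ρ := mul_le_mul_of_nonneg_left h2 hCnn
  exact add_le_add part1 part2
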